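/- For every μ > 0, the maximum over x ∈ [0,1] of g(x) := -2x/μ + 1/μ + (e^{2μx} - e^{2μ(1-x)})/(μ(e^{2μ} - 1)) is attained at x* = (1/(2μ))(log((sinh μ / μ)(1 - √(1 - μ²/sinh²μ))) + μ), and its value equals c*(μ) := -(1/μ²)[log((sinh μ / μ)(1 - √(1 - μ²/sinh²μ))) + √(1 - μ²/sinh²μ)]. -/

import Mathlib

open Real Set

lemma aux_exp (t : ℝ) : (1 - t) * Real.exp t ≤ 1 := by
  have h := Real.add_one_le_exp (-t)
  have h2 := Real.exp_pos t
  have h3 : Real.exp (-t) * Real.exp t = 1 := by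
    rw [← Real.exp_add]; simp
  nlinarith

lemma aux_key (t : ℝ) (ht : 0 ≤ t) : Real.exp (2*t) - 1 ≤ t * (Real.exp (2*t) + 1) := by
  set F : ℝ → ℝ := fun u => u * (Real.exp (2*u) + 1) - (Real.exp (2*u) - 1) with hF
  have hd : ∀ u : ℝ, HasDerivAt F (1 - (1 - 2*u) * Real.exp (2*u)) u := by
    intro u
    have h1 : HasDerivAt (fun u : ℝ => 2*u) 2 u := by
      simpa using (hasDerivAt_id u).const_mul 2
    have h2 : HasDerivAt (fun u : ℝ => Real.exp (2*u)) (Real.exp (2*u) * 2) u :=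
      (Real.hasDerivAt_exp (2*u)).comp u h1
    have h3 : HasDerivAt (fun u : ℝ => u * (Real.exp (2*u) + 1))
        (1 * (Real.exp (2*u) + 1) + u * (Real.exp (2*u) * 2)) u :=
      (hasDerivAt_id u).mul (h2.add_const 1)
    have h4 : HasDerivAt F (1 * (Real.exp (2*u) + 1) + u * (Real.exp (2*u) * 2) - Real.exp (2*u) * 2) u :=
      h3.sub (h2.sub_const 1)
    convert h4 using 1
    ring
  have hmono : MonotoneOn F (Set.Ici (0:ℝ)) := by
    apply monotoneOn_of_deriv_nonneg (convex_Ici 0)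
    · exact (Continuous.continuousOn (by continuity))
    · intro x hx
      exact (hd x).differentiableAt.differentiableWithinAt
    · intro x hx
      rw [(hd x).deriv]
      have := aux_exp (2*x)
      nlinarith
  have h0 : F 0 ≤ F t := hmono (Set.self_mem_Ici) (Set.mem_Ici.mpr ht) ht
  simp only [hF, zero_mul, mul_zero, Real.exp_zero] at h0
  linarith

lemma convexOn_sinh' : ConvexOn ℝ (Set.Ici (0:ℝ)) Real.sinh := by
  apply convexOn_of_deriv2_nonneg (convex_Ici 0) Real.continuous_sinh.continuousOn
    Real.differentiable_sinh.differentiableOn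
  · simp only [Real.deriv_sinh]
    exact Real.differentiable_cosh.differentiableOn
  · intro x hx
    rw [interior_Ici, Set.mem_Ioi] at hx
    simp only [Function.iterate_succ, Function.iterate_zero, Function.comp_apply, id_eq,
      Real.deriv_sinh, Real.deriv_cosh]
    positivity

lemma tangent_pos (a b : ℝ) (ha : 0 ≤ a) (hb : 0 ≤ b) :
    Real.sinh a + Real.cosh a * (b - a) ≤ Real.sinh b := by
  rcases lt_trichotomy a b with h | h | h
  · have h2 := convexOn_sinh'.le_slope_of_hasDerivAt ha hb h (Real.hasDerivAt_sinh a)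
    rw [slope_def_field, le_div_iff₀ (by linarith : (0:ℝ) < b - a)] at h2
    linarith
  · subst h; simp
  · have h2 := convexOn_sinh'.slope_le_of_hasDerivAt hb ha h (Real.hasDerivAt_sinh a)
    rw [slope_def_field, div_le_iff₀ (by linarith : (0:ℝ) < a - b)] at h2
    linarith

lemma tangent_neg (a b : ℝ) (ha : a ≤ 0) (hb : b ≤ 0) :
    Real.sinh b ≤ Real.sinh a + Real.cosh a * (b - a) := by
  have h := tangent_pos (-a) (-b) (by linarith) (by linarith)
  simp only [Real.sinh_neg, Real.cosh_neg] at h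
  linarith

lemma chord (y μ : ℝ) (h0 : 0 ≤ y) (h1 : y ≤ μ) (hμ : 0 < μ) :
    μ * Real.sinh y ≤ y * Real.sinh μ := by
  have hmem0 : (0:ℝ) ∈ Set.Ici (0:ℝ) := Set.self_mem_Ici
  have hmemμ : μ ∈ Set.Ici (0:ℝ) := Set.mem_Ici.mpr hμ.le
  have ht0 : 0 ≤ 1 - y/μ := by
    rw [sub_nonneg, div_le_one hμ]; exact h1
  have ht1 : 0 ≤ y/μ := by positivity
  have hsum : (1 - y/μ) + y/μ = 1 := by ring
  have h2 := convexOn_sinh'.2 hmem0 hmemμ ht0 ht1 hsum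
  simp only [smul_eq_mul, mul_zero, zero_add, Real.sinh_zero] at h2
  have hyy : y/μ * μ = y := by field_simp
  rw [hyy] at h2
  have h3 := mul_le_mul_of_nonneg_left h2 hμ.le
  have h4 : μ * (y/μ * Real.sinh μ) = y * Real.sinh μ := by field_simp
  linarith

lemma le_one_helper (P r : ℝ) (hr : 0 ≤ r) (h : P * (1 + r) ≤ 1 + r) : P ≤ 1 := by nlinarith

lemma mul_inv_helper (P X Y : ℝ) (hX : 0 ≤ X) (hXY : X * Y = 1) (h : P * Y ≤ 1) : P ≤ X := by
  have hP : X * (P * Y) = P := by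
    rw [mul_comm P Y, ← mul_assoc, hXY, one_mul]
  calc P = X * (P * Y) := hP.symm
    _ ≤ X * 1 := mul_le_mul_of_nonneg_left h hX
    _ = X := mul_one X

lemma sq_le_imp (a b : ℝ) (ha : 0 ≤ a) (hb : 0 ≤ b) (h : a ^ 2 ≤ b ^ 2) : a ≤ b := by
  nlinarith

set_option maxHeartbeats 2000000 in
theorem stmt_1 (μ : ℝ) (hμ : 0 < μ)
    (g : ℝ → ℝ)
    (hg : ∀ x, g x = -2 * x / μ + 1 / μ +
      (Real.exp (2 * μ * x) - Real.exp (2 * μ * (1 - x))) / (μ * (Real.exp (2 * μ) - 1)))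
    (xstar : ℝ)
    (hx : xstar = (1 / (2 * μ)) *
      (Real.log ((Real.sinh μ / μ) * (1 - Real.sqrt (1 - μ ^ 2 / Real.sinh μ ^ 2))) + μ))
    (cstar : ℝ)
    (hc : cstar = -(1 / μ ^ 2) *
      (Real.log ((Real.sinh μ / μ) * (1 - Real.sqrt (1 - μ ^ 2 / Real.sinh μ ^ 2)))
        + Real.sqrt (1 - μ ^ 2 / Real.sinh μ ^ 2))) :
    xstar ∈ Set.Icc (0 : ℝ) 1 ∧ IsMaxOn g (Set.Icc (0 : ℝ) 1) xstar ∧ g xstar = cstar := by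
  obtain ⟨s, hs_def⟩ : ∃ t, Real.sinh μ = t := ⟨_, rfl⟩
  rw [hs_def] at hx hc
  have hμs : μ < s := hs_def ▸ Real.self_lt_sinh_iff.mpr hμ
  have hs0 : 0 < s := hμ.trans hμs
  obtain ⟨r, hr_def⟩ : ∃ t, Real.sqrt (1 - μ ^ 2 / s ^ 2) = t := ⟨_, rfl⟩
  rw [hr_def] at hx hc
  have hsub : 0 ≤ 1 - μ ^ 2 / s ^ 2 := by
    have : μ ^ 2 / s ^ 2 ≤ 1 := by
      rw [div_le_one (by positivity)]
      nlinarith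
    linarith
  have hr2 : r ^ 2 = 1 - μ ^ 2 / s ^ 2 := hr_def ▸ Real.sq_sqrt hsub
  have hr0 : 0 ≤ r := hr_def ▸ Real.sqrt_nonneg _
  have hr1 : r < 1 := by
    have h1 : μ ^ 2 / s ^ 2 > 0 := by positivity
    nlinarith
  obtain ⟨A, hA_def⟩ : ∃ t, s / μ * (1 - r) = t := ⟨_, rfl⟩
  rw [hA_def] at hx hc
  have hA0 : 0 < A := by
    rw [← hA_def]
    have : 0 < 1 - r := by linarith
    positivity
  have hrs2 : r ^ 2 * s ^ 2 = s ^ 2 - μ ^ 2 := by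
    field_simp at hr2
    linarith
  have hAinv : A * (s / μ * (1 + r)) = 1 := by
    rw [← hA_def]
    field_simp
    nlinarith [hrs2]
  have hiA : 1 / A = s / μ * (1 + r) :=
    eq_one_div_of_mul_eq_one_right hAinv |>.symm
  have hA1 : A < 1 := by
    have hbig : 1 < s / μ * (1 + r) := by
      have h1 : 1 < s / μ := by rw [lt_div_iff₀ hμ]; linarith
      nlinarith
    nlinarith [hAinv]
  have hlogA_neg : Real.log A < 0 := Real.log_neg hA0 hA1
  -- cosh and sinh at log A
  have hexplog : Real.exp (Real.log A) = A := Real.exp_log hA0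
  have hexpneg : Real.exp (-(Real.log A)) = 1 / A := by
    rw [Real.exp_neg, hexplog]; exact (one_div A).symm
  have hcoshA : Real.cosh (Real.log A) = s / μ := by
    rw [Real.cosh_eq, hexplog, hexpneg, hiA, ← hA_def]; ring
  have hsinhA : Real.sinh (Real.log A) = -(s / μ) * r := by
    rw [Real.sinh_eq, hexplog, hexpneg, hiA, ← hA_def]; ring
  -- exponential facts
  obtain ⟨E, hE_def⟩ : ∃ t, Real.exp μ = t := ⟨_, rfl⟩
  have hE1 : 1 < E := by
    have := Real.add_one_le_exp μ
    rw [hE_def] at this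
    linarith
  have hE0 : (0:ℝ) < E := zero_lt_one.trans hE1
  have hkeyμ : E * E - 1 ≤ μ * (E * E + 1) := by
    have h := aux_key μ hμ.le
    have h2m : Real.exp (2 * μ) = E * E := by rw [← hE_def, ← Real.exp_add]; ring_nf
    rw [h2m] at h; exact h
  have hsE : 2 * s = E - 1 / E := by
    rw [← hs_def, Real.sinh_eq, Real.exp_neg, hE_def, inv_eq_one_div]; ring
  have h2sE : 2 * s * E = E * E - 1 := by
    have h : (1 / E) * E = 1 := by field_simp
    linear_combination E * hsE - h
  have hs_le : s ≤ μ * E := by nlinarith [hkeyμ, h2sE, hμ, hE1]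
  have h1 : s * (1 + r) ≤ μ * E := by
    have hsr : (s * r) ^ 2 = s ^ 2 - μ ^ 2 := by nlinarith [hrs2]
    have hd0 : 0 ≤ μ * E - s := by linarith
    have hsq : (s * r) ^ 2 ≤ (μ * E - s) ^ 2 := by nlinarith [hkeyμ, h2sE, hμ]
    have hsr0 : 0 ≤ s * r := mul_nonneg hs0.le hr0
    have := sq_le_imp _ _ hsr0 hd0 hsq
    linarith
  have hlogA_ge : -μ ≤ Real.log A := by
    rw [Real.le_log_iff_exp_le hA0]
    have hAE : 1 / A ≤ E := by
      rw [hiA, div_mul_eq_mul_div, div_le_iff₀ hμ]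
      nlinarith [h1]
    have : Real.exp (-μ) = 1 / E := by rw [Real.exp_neg, ← hE_def, inv_eq_one_div]
    rw [this, div_le_iff₀ hE0]
    rw [div_le_iff₀ hA0] at hAE
    nlinarith [hA0]
  have hlogA_le_r : Real.log A ≤ -r := by
    have hA2 : A ^ 2 * (1 + r) = 1 - r := by
      rw [← hA_def]
      field_simp
      nlinarith [hrs2]
    have hkr := aux_key r hr0
    have hprod : Real.exp (-(2 * r)) * Real.exp (2 * r) = 1 := by
      rw [← Real.exp_add]; simp
    have hee : Real.exp (-r) ^ 2 = Real.exp (-(2 * r)) := by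
      rw [sq, ← Real.exp_add]; ring_nf
    have hY : 0 < Real.exp (2 * r) := Real.exp_pos _
    have h5 : (1 - r) * Real.exp (2 * r) ≤ 1 + r := by linarith [hkr]
    have h6 : A ^ 2 * Real.exp (2 * r) * (1 + r) ≤ 1 + r := by
      have heq6 : A ^ 2 * Real.exp (2 * r) * (1 + r) = (1 - r) * Real.exp (2 * r) := by
        rw [← hA2]; ring
      rw [heq6]; exact h5
    have h7 : A ^ 2 * Real.exp (2 * r) ≤ 1 := le_one_helper _ _ hr0 h6
    have hsq2 : A ^ 2 ≤ Real.exp (-r) ^ 2 := by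
      rw [hee]
      exact mul_inv_helper _ _ _ (Real.exp_pos _).le hprod h7
    have hAle : A ≤ Real.exp (-r) :=
      sq_le_imp _ _ hA0.le (Real.exp_pos _).le hsq2
    calc Real.log A ≤ Real.log (Real.exp (-r)) :=
          Real.log_le_log hA0 hAle
      _ = -r := Real.log_exp _
  have hcs : cstar = (-r - Real.log A) / μ ^ 2 := by rw [hc]; ring
  -- rewrite of g
  have hgy : ∀ x : ℝ, g x =
      (μ * Real.sinh (μ * (2 * x - 1)) / s - μ * (2 * x - 1)) / μ ^ 2 := by
    intro x
    rw [hg x]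
    have ht0 : 0 < Real.exp (μ * (2 * x - 1)) := Real.exp_pos _
    have h2x : Real.exp (2 * μ * x) = Real.exp (μ * (2 * x - 1)) * E := by
      rw [← hE_def, ← Real.exp_add]; ring_nf
    have h2x' : Real.exp (2 * μ * (1 - x)) = E / Real.exp (μ * (2 * x - 1)) := by
      rw [eq_div_iff ht0.ne', ← hE_def, ← Real.exp_add]; ring_nf
    have h2m : Real.exp (2 * μ) = E * E := by rw [← hE_def, ← Real.exp_add]; ring_nf
    have hsh : Real.sinh (μ * (2 * x - 1)) =
        (Real.exp (μ * (2 * x - 1)) - 1 / Real.exp (μ * (2 * x - 1))) / 2 := by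
      rw [Real.sinh_eq, Real.exp_neg, inv_eq_one_div]
    have hs_eq : s = (E - 1 / E) / 2 := by linarith [hsE]
    have hden : E * E - 1 ≠ 0 := by nlinarith
    rw [h2x, h2x', h2m, hsh, hs_eq]
    field_simp
    ring
  have hyx : μ * (2 * xstar - 1) = Real.log A := by
    rw [hx]; field_simp; ring
  have hgx : g xstar = cstar := by
    rw [hgy xstar, hyx, hsinhA, hcs]
    rw [div_eq_div_iff (by positivity) (by positivity)]
    field_simp
  refine ⟨⟨?_, ?_⟩, ?_, hgx⟩
  · rw [hx]
    apply mul_nonneg (by positivity)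
    linarith
  · rw [hx]
    have h2 : Real.log A + μ ≤ 2 * μ := by linarith
    calc 1 / (2 * μ) * (Real.log A + μ) ≤ 1 / (2 * μ) * (2 * μ) :=
          mul_le_mul_of_nonneg_left h2 (by positivity)
      _ = 1 := by field_simp
  · intro x hxm
    simp only [Set.mem_setOf_eq]
    obtain ⟨hx0, hx1⟩ := hxm
    rw [hgx, hgy x, hcs]
    set y := μ * (2 * x - 1) with hy_def
    have hnum : μ * Real.sinh y / s - y ≤ -r - Real.log A := by
      rcases le_or_gt 0 y with hy0 | hy0
      · have hyμ : y ≤ μ := by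
          have h9 := mul_le_mul_of_nonneg_left (by linarith : 2 * x - 1 ≤ 1) hμ.le
          rw [hy_def]; linarith [h9]
        have hch := chord y μ hy0 hyμ hμ
        rw [hs_def] at hch
        have : μ * Real.sinh y / s ≤ y := by
          rw [div_le_iff₀ hs0]; linarith
        linarith
      · have hym : -μ ≤ y := by
          have h9 := mul_le_mul_of_nonneg_left (by linarith : -1 ≤ 2 * x - 1) hμ.le
          rw [hy_def]; linarith [h9]
        have htan := tangent_neg (Real.log A) y hlogA_neg.le hy0.le
        rw [hsinhA, hcoshA] at htan
        have hmul := mul_le_mul_of_nonneg_left htan hμ.le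
        have heq : μ * (-(s / μ) * r + s / μ * (y - Real.log A)) =
            s * (-r + (y - Real.log A)) := by field_simp
        rw [heq] at hmul
        rw [sub_le_iff_le_add, div_le_iff₀ hs0]
        linarith
    exact div_le_div_of_nonneg_right hnum (by positivity) |>.trans_eq rfl
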